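/- Let ψ ≥ 2 be a natural number. In the ψ×ψ grid graph, the worst-case swap count for bringing two qubit states adjacent equals exactly 2ψ − 3. Precisely: (i) for every pair of distinct vertices a, b there exists a composition σ of at most 2ψ − 3 adjacent transpositions with σ(a) adjacent to σ(b); and (ii) for the opposite corner vertices a = (0,0) and b = (ψ−1, ψ−1), every composition σ of k adjacent transpositions with σ(a) adjacent to σ(b) satisfies k ≥ 2ψ − 3. -/

import Mathlib

/-- The ψ×ψ grid graph on `Fin ψ × Fin ψ`: two vertices are adjacent iff their
L1 distance (sum of absolute differences of coordinates, as naturals) is 1. -/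
def gridGraph (ψ : ℕ) : SimpleGraph (Fin ψ × Fin ψ) where
  Adj u v := Nat.dist u.1.val v.1.val + Nat.dist u.2.val v.2.val = 1
  symm := by
    constructor
    intro u v h
    simpa [Nat.dist_comm] using h
  loopless := by
    constructor
    intro u h
    simp [Nat.dist_self] at h

private def gD {ψ : ℕ} (a b : Fin ψ × Fin ψ) : ℕ :=
  Nat.dist a.1.val b.1.val + Nat.dist a.2.val b.2.val

private lemma grid_adj_iff {ψ : ℕ} (a b : Fin ψ × Fin ψ) :
    (gridGraph ψ).Adj a b ↔ gD a b = 1 := Iff.rfl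

private lemma gD_eq_zero {ψ : ℕ} {a b : Fin ψ × Fin ψ} (h : gD a b = 0) : a = b := by
  simp only [gD, Nat.dist] at h
  ext <;> omega

private lemma swap_step {ψ : ℕ} (u v x y : Fin ψ × Fin ψ) (huv : gD u v = 1) :
    gD x y ≤ gD (Equiv.swap u v x) (Equiv.swap u v y) + 1 := by
  simp only [Equiv.swap_apply_def]
  split_ifs with h1 h2 h3 h4 h5 h6 h7 h8 <;>
    (try subst h1) <;> (try subst h2) <;> (try subst h3) <;>
    (try subst h4) <;> (try subst h5) <;> (try subst h6) <;>
    (try subst h7) <;> (try subst h8) <;>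
    simp only [gD, Nat.dist] at * <;> omega

private lemma gD_lower {ψ : ℕ} (L : List ((Fin ψ × Fin ψ) × (Fin ψ × Fin ψ)))
    (hL : ∀ p ∈ L, (gridGraph ψ).Adj p.1 p.2) (x y : Fin ψ × Fin ψ) :
    gD x y ≤ gD ((L.map fun p => Equiv.swap p.1 p.2).prod x)
      ((L.map fun p => Equiv.swap p.1 p.2).prod y) + L.length := by
  induction L with
  | nil => simp
  | cons p L ih =>
    simp only [List.map_cons, List.prod_cons, Equiv.Perm.mul_apply, List.length_cons]
    have h1 := ih (fun q hq => hL q (List.mem_cons_of_mem p hq))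
    have h2 := swap_step p.1 p.2 ((L.map fun p => Equiv.swap p.1 p.2).prod x)
      ((L.map fun p => Equiv.swap p.1 p.2).prod y)
      ((grid_adj_iff p.1 p.2).mp (hL p List.mem_cons_self))
    omega

private lemma step_exists {ψ : ℕ} (a b : Fin ψ × Fin ψ) (hab : a ≠ b) :
    ∃ a' : Fin ψ × Fin ψ, (gridGraph ψ).Adj a a' ∧ gD a' b + 1 = gD a b := by
  have hb1 := b.1.isLt
  have hb2 := b.2.isLt
  have ha1 := a.1.isLt
  have ha2 := a.2.isLt
  rcases lt_trichotomy a.1.val b.1.val with h | h | h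
  · refine ⟨(⟨a.1.val + 1, by omega⟩, a.2), ?_, ?_⟩ <;>
      simp only [grid_adj_iff, gD, Nat.dist] <;> omega
  · rcases lt_trichotomy a.2.val b.2.val with h' | h' | h'
    · refine ⟨(a.1, ⟨a.2.val + 1, by omega⟩), ?_, ?_⟩ <;>
        simp only [grid_adj_iff, gD, Nat.dist] <;> omega
    · exact absurd (by ext <;> omega : a = b) hab
    · refine ⟨(a.1, ⟨a.2.val - 1, by omega⟩), ?_, ?_⟩ <;>
        simp only [grid_adj_iff, gD, Nat.dist] <;> omega
  · refine ⟨(⟨a.1.val - 1, by omega⟩, a.2), ?_, ?_⟩ <;>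
      simp only [grid_adj_iff, gD, Nat.dist] <;> omega

private lemma gD_upper {ψ : ℕ} : ∀ (n : ℕ) (a b : Fin ψ × Fin ψ), gD a b = n → a ≠ b →
    ∃ L : List ((Fin ψ × Fin ψ) × (Fin ψ × Fin ψ)),
      L.length ≤ n - 1 ∧ (∀ p ∈ L, (gridGraph ψ).Adj p.1 p.2) ∧
      (gridGraph ψ).Adj ((L.map fun p => Equiv.swap p.1 p.2).prod a)
        ((L.map fun p => Equiv.swap p.1 p.2).prod b) := by
  intro n
  induction n with
  | zero => intro a b h hab; exact absurd (gD_eq_zero h) hab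
  | succ n ih =>
    intro a b h hab
    by_cases h1 : n = 0
    · subst h1
      exact ⟨[], by simp, by simp, by simpa [grid_adj_iff] using h⟩
    · obtain ⟨a', hadj, hd⟩ := step_exists a b hab
      have hd' : gD a' b = n := by omega
      have hab' : a' ≠ b := by
        intro e
        rw [e] at hd'
        simp [gD, Nat.dist_self] at hd'
        exact h1 hd'.symm
      obtain ⟨L', hlen, hmem, hadj'⟩ := ih a' b hd' hab'
      refine ⟨L' ++ [(a, a')], ?_, ?_, ?_⟩
      · simp only [List.length_append, List.length_singleton]
        omega
      · intro p hp
        rcases List.mem_append.mp hp with hp | hp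
        · exact hmem p hp
        · simp only [List.mem_singleton] at hp
          subst hp
          exact hadj
      · have hba : b ≠ a := fun e => hab e.symm
        have hba' : b ≠ a' := fun e => hab' e.symm
        simpa only [List.map_append, List.prod_append, List.map_cons, List.map_nil,
          List.prod_cons, List.prod_nil, mul_one, Equiv.Perm.mul_apply,
          Equiv.swap_apply_left, Equiv.swap_apply_of_ne_of_ne hba hba'] using hadj'

/-- For ψ ≥ 2, the worst-case number of adjacent transpositions (swap gates)
needed to bring two qubit states adjacent on the ψ×ψ grid is exactly 2ψ − 3:
(i) any two distinct vertices can be brought adjacent by a composition of at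
most 2ψ − 3 adjacent transpositions, and (ii) for the opposite corners
(0,0) and (ψ−1,ψ−1), every composition of `k` adjacent transpositions bringing
them adjacent satisfies `k ≥ 2ψ − 3`. -/
theorem gridGraph_worst_case_swaps (ψ : ℕ) (hψ : 2 ≤ ψ) :
    (∀ a b : Fin ψ × Fin ψ, a ≠ b →
      ∃ L : List ((Fin ψ × Fin ψ) × (Fin ψ × Fin ψ)),
        L.length ≤ 2 * ψ - 3 ∧
        (∀ p ∈ L, (gridGraph ψ).Adj p.1 p.2) ∧
        (gridGraph ψ).Adj ((L.map fun p => Equiv.swap p.1 p.2).prod a)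
          ((L.map fun p => Equiv.swap p.1 p.2).prod b)) ∧
    (∀ (k : ℕ) (L : List ((Fin ψ × Fin ψ) × (Fin ψ × Fin ψ))),
      L.length = k →
      (∀ p ∈ L, (gridGraph ψ).Adj p.1 p.2) →
      (gridGraph ψ).Adj
        ((L.map fun p => Equiv.swap p.1 p.2).prod
          (⟨0, by omega⟩, ⟨0, by omega⟩))
        ((L.map fun p => Equiv.swap p.1 p.2).prod
          (⟨ψ - 1, by omega⟩, ⟨ψ - 1, by omega⟩)) →
      k ≥ 2 * ψ - 3) := by
  constructor
  · intro a b hab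
    obtain ⟨L, hlen, hmem, hadj⟩ := gD_upper (gD a b) a b rfl hab
    refine ⟨L, ?_, hmem, hadj⟩
    have hb1 := b.1.isLt
    have hb2 := b.2.isLt
    have ha1 := a.1.isLt
    have ha2 := a.2.isLt
    have : gD a b ≤ 2 * ψ - 2 := by
      simp only [gD, Nat.dist]
      omega
    omega
  · intro k L hk hmem hadj
    have hlow := gD_lower L hmem (⟨⟨0, by omega⟩, ⟨0, by omega⟩⟩ : Fin ψ × Fin ψ)
      (⟨⟨ψ - 1, by omega⟩, ⟨ψ - 1, by omega⟩⟩ : Fin ψ × Fin ψ)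
    rw [grid_adj_iff] at hadj
    have hD : gD ((⟨⟨0, by omega⟩, ⟨0, by omega⟩⟩ : Fin ψ × Fin ψ))
        (⟨⟨ψ - 1, by omega⟩, ⟨ψ - 1, by omega⟩⟩ : Fin ψ × Fin ψ) = 2 * ψ - 2 := by
      simp only [gD, Nat.dist]
      omega
    omega
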